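/- Fix a real number N > 1 and D ∈ (0,π], set ε := π − D and λ_D := ∫_0^D h_N(t) dt, and assume ε < ω_N. Let h be a CD(N−1,N) density on [0,D] with ∫_0^D h(t) dt = 1. Then for every t ∈ (0,D) it holds (ω_N/(ω_N·λ_D + ε)) · min{h_N(t), h_N(t+ε)} ≤ h(t) ≤ (ω_N/(ω_N − ε)) · max{h_N(t), h_N(t+ε)}. -/

import Mathlib

open Real MeasureTheory Set Filter

/-- `ω_N = ∫_0^π sin^{N-1}(t) dt`. -/
noncomputable def omegaN (N : ℝ) : ℝ := ∫ t in (0:ℝ)..π, Real.sin t ^ (N - 1)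

/-- The model density `h_N(t) = sin^{N-1}(t)/ω_N`. -/
noncomputable def hmodel (N t : ℝ) : ℝ := Real.sin t ^ (N - 1) / omegaN N

/-- `h` is a `CD(N-1,N)` density on `[0,D]`. -/
def IsCDDensity (N D : ℝ) (h : ℝ → ℝ) : Prop :=
  (∀ t ∈ Set.Icc (0:ℝ) D, 0 ≤ h t) ∧
  ∀ t₀ t₁ s : ℝ, 0 ≤ t₀ → t₀ ≤ t₁ → t₁ ≤ D → s ∈ Set.Icc (0:ℝ) 1 →
    Real.sin ((1 - s) * (t₁ - t₀)) * h t₀ ^ (1 / (N - 1))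
      + Real.sin (s * (t₁ - t₀)) * h t₁ ^ (1 / (N - 1))
    ≤ Real.sin (t₁ - t₀) * h ((1 - s) * t₀ + s * t₁) ^ (1 / (N - 1))

private lemma rpow_cancel {N x : ℝ} (hN : 1 < N) (hx : 0 ≤ x) :
    (x ^ (1 / (N - 1))) ^ (N - 1) = x := by
  have hne : N - 1 ≠ 0 := by intro h; nlinarith
  rw [← Real.rpow_mul hx, one_div_mul_cancel hne, Real.rpow_one]

private lemma cd_helper₁ {N a b x y : ℝ} (hN : 1 < N) (ha : 0 ≤ a) (hb : 0 < b)
    (hx : 0 ≤ x) (hy : 0 ≤ y)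
    (hle : a * y ^ (1 / (N - 1)) ≤ b * x ^ (1 / (N - 1))) :
    (a / b) ^ (N - 1) * y ≤ x := by
  have hp : (0:ℝ) < N - 1 := by linarith
  have h1 : (a / b) * y ^ (1 / (N - 1)) ≤ x ^ (1 / (N - 1)) := by
    rw [div_mul_eq_mul_div, div_le_iff₀ hb]; linarith
  have h2 := Real.rpow_le_rpow (by positivity) h1 hp.le
  rwa [Real.mul_rpow (by positivity) (Real.rpow_nonneg hy _), rpow_cancel hN hx,
    rpow_cancel hN hy] at h2

private lemma cd_helper₂ {N a b x y : ℝ} (hN : 1 < N) (ha : 0 < a) (hb : 0 ≤ b)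
    (hx : 0 ≤ x) (hy : 0 ≤ y)
    (hle : a * y ^ (1 / (N - 1)) ≤ b * x ^ (1 / (N - 1))) :
    y ≤ (b / a) ^ (N - 1) * x := by
  have hp : (0:ℝ) < N - 1 := by linarith
  have h1 : y ^ (1 / (N - 1)) ≤ (b / a) * x ^ (1 / (N - 1)) := by
    rw [div_mul_eq_mul_div, le_div_iff₀ ha]; linarith
  have h2 := Real.rpow_le_rpow (Real.rpow_nonneg hy _) h1 hp.le
  rwa [Real.mul_rpow (by positivity) (Real.rpow_nonneg hx _), rpow_cancel hN hx,
    rpow_cancel hN hy] at h2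

private lemma g_cont {N : ℝ} (hN : 1 < N) : Continuous fun x : ℝ => Real.sin x ^ (N - 1) :=
  Real.continuous_sin.rpow_const fun _ => Or.inr (by linarith)

private lemma g_nonneg {N : ℝ} (hN : 1 < N) {x : ℝ} (h0 : 0 ≤ x) (h1 : x ≤ π) :
    0 ≤ Real.sin x ^ (N - 1) :=
  Real.rpow_nonneg (Real.sin_nonneg_of_nonneg_of_le_pi h0 h1) _

private lemma g_int_nonneg {N : ℝ} (hN : 1 < N) {a b : ℝ} (hab : a ≤ b) (h0 : 0 ≤ a)
    (h1 : b ≤ π) : 0 ≤ ∫ x in a..b, Real.sin x ^ (N - 1) := by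
  apply intervalIntegral.integral_nonneg hab
  intro x hx
  exact g_nonneg hN (h0.trans hx.1) (hx.2.trans h1)

private lemma g_int_le {N : ℝ} (hN : 1 < N) {a b : ℝ} (hab : a ≤ b) (h0 : 0 ≤ a)
    (h1 : b ≤ π) : (∫ x in a..b, Real.sin x ^ (N - 1)) ≤ b - a := by
  have hone : (∫ _x in a..b, (1:ℝ)) = b - a := by simp
  rw [← hone]
  apply intervalIntegral.integral_mono_on hab ((g_cont hN).intervalIntegrable a b)
    intervalIntegrable_const
  intro x hx
  exact Real.rpow_le_one (Real.sin_nonneg_of_nonneg_of_le_pi (h0.trans hx.1) (hx.2.trans h1))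
    (Real.sin_le_one x) (by linarith)

private lemma g_reflect (N a b : ℝ) :
    (∫ x in a..b, Real.sin x ^ (N - 1)) = ∫ x in (π - b)..(π - a), Real.sin x ^ (N - 1) := by
  rw [← intervalIntegral.integral_comp_sub_left (fun x => Real.sin x ^ (N - 1)) π]
  simp [Real.sin_pi_sub]

/-- Proposition A.3 (Proposition `P:estimatedensity`): two-sided pointwise comparison of
a normalized `CD(N-1,N)` density on `[0,D]` with the model density, with
`ε = π - D` and `λ_D = ∫_0^D h_N`. -/
theorem cd_density_pointwise_estimate (N D : ℝ) (hN1 : 1 < N) (hD : D ∈ Set.Ioc (0:ℝ) π)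
    (hε : π - D < omegaN N)
    (h : ℝ → ℝ) (hcd : IsCDDensity N D h) (hint : (∫ t in (0:ℝ)..D, h t) = 1)
    (t : ℝ) (ht : t ∈ Set.Ioo (0:ℝ) D) :
    (omegaN N / (omegaN N * (∫ s in (0:ℝ)..D, hmodel N s) + (π - D))) *
        min (hmodel N t) (hmodel N (t + (π - D))) ≤ h t ∧
    h t ≤ (omegaN N / (omegaN N - (π - D))) *
        max (hmodel N t) (hmodel N (t + (π - D))) := by
  obtain ⟨hD0, hDπ⟩ := hD
  obtain ⟨ht0, htD⟩ := ht
  obtain ⟨hpos, hcd'⟩ := hcd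
  have hp : (0:ℝ) < N - 1 := by linarith
  have htπ : t < π := lt_of_lt_of_le htD hDπ
  have hsint : 0 < Real.sin t := Real.sin_pos_of_pos_of_lt_pi ht0 htπ
  have hsinDt : 0 < Real.sin (D - t) := Real.sin_pos_of_pos_of_lt_pi (by linarith) (by linarith)
  have hgc : Continuous fun x : ℝ => Real.sin x ^ (N - 1) := g_cont hN1
  have hgint : ∀ a b : ℝ, IntervalIntegrable (fun x => Real.sin x ^ (N - 1)) volume a b :=
    fun a b => hgc.intervalIntegrable a b
  have hωpos : 0 < omegaN N := by
    apply intervalIntegral.intervalIntegral_pos_of_pos_on (hgint 0 π) _ Real.pi_pos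
    intro x hx
    exact Real.rpow_pos_of_pos (Real.sin_pos_of_pos_of_lt_pi hx.1 hx.2) _
  have hZpos : 0 < ∫ x in (0:ℝ)..D, Real.sin x ^ (N - 1) := by
    apply intervalIntegral.intervalIntegral_pos_of_pos_on (hgint 0 D) _ hD0
    intro x hx
    exact Real.rpow_pos_of_pos (Real.sin_pos_of_pos_of_lt_pi hx.1 (lt_of_lt_of_le hx.2 hDπ)) _
  have hInt : IntervalIntegrable h volume 0 D := by
    by_contra hc
    rw [intervalIntegral.integral_undef hc] at hint
    exact one_ne_zero hint.symm
  have hInt1 : IntervalIntegrable h volume 0 t :=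
    hInt.mono_set (by
      rw [Set.uIcc_of_le ht0.le, Set.uIcc_of_le hD0.le]
      exact Set.Icc_subset_Icc le_rfl htD.le)
  have hInt2 : IntervalIntegrable h volume t D :=
    hInt.mono_set (by
      rw [Set.uIcc_of_le htD.le, Set.uIcc_of_le hD0.le]
      exact Set.Icc_subset_Icc ht0.le le_rfl)
  have hht : 0 ≤ h t := hpos t ⟨ht0.le, htD.le⟩
  have hgt : 0 < Real.sin t ^ (N - 1) := Real.rpow_pos_of_pos hsint _
  have hgDt : 0 < Real.sin (D - t) ^ (N - 1) := Real.rpow_pos_of_pos hsinDt _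
  -- key three-point inequality
  have key : ∀ t₀ u t₁ : ℝ, 0 ≤ t₀ → t₀ ≤ u → u ≤ t₁ → t₁ ≤ D →
      Real.sin (t₁ - u) * h t₀ ^ (1 / (N - 1)) + Real.sin (u - t₀) * h t₁ ^ (1 / (N - 1))
        ≤ Real.sin (t₁ - t₀) * h u ^ (1 / (N - 1)) := by
    intro t₀ u t₁ h0 h1 h2 h3
    rcases eq_or_lt_of_le (h1.trans h2) with heq | hlt
    · have hu1 : u = t₀ := le_antisymm (heq ▸ h2) h1
      subst hu1
      rw [← heq]
      simp
    · have hne : t₁ - t₀ ≠ 0 := sub_ne_zero.mpr hlt.ne'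
      have hs : (u - t₀) / (t₁ - t₀) ∈ Set.Icc (0:ℝ) 1 := by
        constructor
        · exact div_nonneg (by linarith) (by linarith)
        · rw [div_le_one (by linarith)]; linarith
      have hmain := hcd' t₀ t₁ ((u - t₀) / (t₁ - t₀)) h0 (h1.trans h2) h3 hs
      have e1 : ((u - t₀) / (t₁ - t₀)) * (t₁ - t₀) = u - t₀ := div_mul_cancel₀ _ hne
      have e2 : (1 - (u - t₀) / (t₁ - t₀)) * (t₁ - t₀) = t₁ - u := by
        field_simp
        ring
      have e3 : (1 - (u - t₀) / (t₁ - t₀)) * t₀ + ((u - t₀) / (t₁ - t₀)) * t₁ = u := by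
        field_simp
        ring
      rw [e1, e2, e3] at hmain
      exact hmain
  -- pointwise bounds
  have low1 : ∀ x ∈ Set.Icc (0:ℝ) t,
      Real.sin x ^ (N - 1) * (h t / Real.sin t ^ (N - 1)) ≤ h x := by
    intro x hx
    have hsx : 0 ≤ Real.sin x := Real.sin_nonneg_of_nonneg_of_le_pi hx.1 (by linarith [hx.2])
    have hk := key 0 x t le_rfl hx.1 hx.2 htD.le
    have hdrop : Real.sin x * h t ^ (1 / (N - 1)) ≤ Real.sin t * h x ^ (1 / (N - 1)) := by
      have h1 : 0 ≤ Real.sin (t - x) :=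
        Real.sin_nonneg_of_nonneg_of_le_pi (by linarith [hx.2]) (by linarith [hx.1])
      have h2 : 0 ≤ h 0 ^ (1 / (N - 1)) := Real.rpow_nonneg (hpos 0 ⟨le_rfl, hD0.le⟩) _
      simp only [sub_zero] at hk
      nlinarith [mul_nonneg h1 h2, hk]
    have hres := cd_helper₁ hN1 hsx hsint (hpos x ⟨hx.1, hx.2.trans htD.le⟩) hht hdrop
    calc Real.sin x ^ (N - 1) * (h t / Real.sin t ^ (N - 1))
        = (Real.sin x / Real.sin t) ^ (N - 1) * h t := by
          rw [Real.div_rpow hsx hsint.le]; ring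
      _ ≤ h x := hres
  have low2 : ∀ x ∈ Set.Icc t D,
      Real.sin (D - x) ^ (N - 1) * (h t / Real.sin (D - t) ^ (N - 1)) ≤ h x := by
    intro x hx
    have hsx : 0 ≤ Real.sin (D - x) :=
      Real.sin_nonneg_of_nonneg_of_le_pi (by linarith [hx.2]) (by linarith [hx.1, ht0])
    have hk := key t x D ht0.le hx.1 hx.2 le_rfl
    have hdrop : Real.sin (D - x) * h t ^ (1 / (N - 1))
        ≤ Real.sin (D - t) * h x ^ (1 / (N - 1)) := by
      have h1 : 0 ≤ Real.sin (x - t) :=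
        Real.sin_nonneg_of_nonneg_of_le_pi (by linarith [hx.1]) (by linarith [hx.2])
      have h2 : 0 ≤ h D ^ (1 / (N - 1)) := Real.rpow_nonneg (hpos D ⟨hD0.le, le_rfl⟩) _
      nlinarith [mul_nonneg h1 h2, hk]
    have hres := cd_helper₁ hN1 hsx hsinDt (hpos x ⟨ht0.le.trans hx.1, hx.2⟩) hht hdrop
    calc Real.sin (D - x) ^ (N - 1) * (h t / Real.sin (D - t) ^ (N - 1))
        = (Real.sin (D - x) / Real.sin (D - t)) ^ (N - 1) * h t := by
          rw [Real.div_rpow hsx hsinDt.le]; ring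
      _ ≤ h x := hres
  have up1 : ∀ x ∈ Set.Icc (0:ℝ) t,
      h x ≤ Real.sin (D - x) ^ (N - 1) * (h t / Real.sin (D - t) ^ (N - 1)) := by
    intro x hx
    have hsx : 0 ≤ Real.sin (D - x) :=
      Real.sin_nonneg_of_nonneg_of_le_pi (by linarith [hx.2]) (by linarith [hx.1])
    have hk := key x t D hx.1 hx.2 htD.le le_rfl
    have hdrop : Real.sin (D - t) * h x ^ (1 / (N - 1))
        ≤ Real.sin (D - x) * h t ^ (1 / (N - 1)) := by
      have h1 : 0 ≤ Real.sin (t - x) :=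
        Real.sin_nonneg_of_nonneg_of_le_pi (by linarith [hx.2]) (by linarith [hx.1])
      have h2 : 0 ≤ h D ^ (1 / (N - 1)) := Real.rpow_nonneg (hpos D ⟨hD0.le, le_rfl⟩) _
      nlinarith [mul_nonneg h1 h2, hk]
    have hres := cd_helper₂ hN1 hsinDt hsx hht (hpos x ⟨hx.1, hx.2.trans htD.le⟩) hdrop
    calc h x ≤ (Real.sin (D - x) / Real.sin (D - t)) ^ (N - 1) * h t := hres
      _ = Real.sin (D - x) ^ (N - 1) * (h t / Real.sin (D - t) ^ (N - 1)) := by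
          rw [Real.div_rpow hsx hsinDt.le]; ring
  have up2 : ∀ x ∈ Set.Icc t D,
      h x ≤ Real.sin x ^ (N - 1) * (h t / Real.sin t ^ (N - 1)) := by
    intro x hx
    have hsx : 0 ≤ Real.sin x :=
      Real.sin_nonneg_of_nonneg_of_le_pi (ht0.le.trans hx.1) (by linarith [hx.2])
    have hk := key 0 t x le_rfl ht0.le hx.1 hx.2
    have hdrop : Real.sin t * h x ^ (1 / (N - 1)) ≤ Real.sin x * h t ^ (1 / (N - 1)) := by
      have h1 : 0 ≤ Real.sin (x - t) :=
        Real.sin_nonneg_of_nonneg_of_le_pi (by linarith [hx.1]) (by linarith [hx.2])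
      have h2 : 0 ≤ h 0 ^ (1 / (N - 1)) := Real.rpow_nonneg (hpos 0 ⟨le_rfl, hD0.le⟩) _
      simp only [sub_zero] at hk
      nlinarith [mul_nonneg h1 h2, hk]
    have hres := cd_helper₂ hN1 hsint hsx hht (hpos x ⟨ht0.le.trans hx.1, hx.2⟩) hdrop
    calc h x ≤ (Real.sin x / Real.sin t) ^ (N - 1) * h t := hres
      _ = Real.sin x ^ (N - 1) * (h t / Real.sin t ^ (N - 1)) := by
          rw [Real.div_rpow hsx hsint.le]; ring
  -- integral comparisons
  have hgc2 : Continuous fun x : ℝ => Real.sin (D - x) ^ (N - 1) :=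
    hgc.comp (continuous_const.sub continuous_id)
  have int1 : (∫ x in (0:ℝ)..t, Real.sin x ^ (N - 1)) * (h t / Real.sin t ^ (N - 1))
      ≤ ∫ x in (0:ℝ)..t, h x := by
    have hmono := intervalIntegral.integral_mono_on ht0.le
      ((hgc.mul continuous_const).intervalIntegrable 0 t) hInt1 low1
    simp only [Pi.mul_apply] at hmono
    rwa [intervalIntegral.integral_mul_const] at hmono
  have eU : (∫ x in (0:ℝ)..t, Real.sin (D - x) ^ (N - 1))
      = ∫ x in (D - t)..D, Real.sin x ^ (N - 1) := by
    have e := intervalIntegral.integral_comp_sub_left (a := (0:ℝ)) (b := t)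
      (fun x => Real.sin x ^ (N - 1)) D
    simpa using e
  have eB : (∫ x in t..D, Real.sin (D - x) ^ (N - 1))
      = ∫ x in (0:ℝ)..(D - t), Real.sin x ^ (N - 1) := by
    have e := intervalIntegral.integral_comp_sub_left (a := t) (b := D)
      (fun x => Real.sin x ^ (N - 1)) D
    simpa using e
  have int2 : (∫ x in (0:ℝ)..(D - t), Real.sin x ^ (N - 1))
        * (h t / Real.sin (D - t) ^ (N - 1))
      ≤ ∫ x in t..D, h x := by
    have hmono := intervalIntegral.integral_mono_on htD.le
      ((hgc2.mul continuous_const).intervalIntegrable t D) hInt2 low2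
    simp only [Pi.mul_apply] at hmono
    rwa [intervalIntegral.integral_mul_const, eB] at hmono
  have int3 : (∫ x in (0:ℝ)..t, h x)
      ≤ (∫ x in (D - t)..D, Real.sin x ^ (N - 1)) * (h t / Real.sin (D - t) ^ (N - 1)) := by
    have hmono := intervalIntegral.integral_mono_on ht0.le hInt1
      ((hgc2.mul continuous_const).intervalIntegrable 0 t) up1
    simp only [Pi.mul_apply] at hmono
    rwa [intervalIntegral.integral_mul_const, eU] at hmono
  have int4 : (∫ x in t..D, h x)
      ≤ (∫ x in t..D, Real.sin x ^ (N - 1)) * (h t / Real.sin t ^ (N - 1)) := by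
    have hmono := intervalIntegral.integral_mono_on htD.le hInt2
      ((hgc.mul continuous_const).intervalIntegrable t D) up2
    simp only [Pi.mul_apply] at hmono
    rwa [intervalIntegral.integral_mul_const] at hmono
  have hsplit : (∫ x in (0:ℝ)..t, h x) + (∫ x in t..D, h x) = 1 := by
    rw [intervalIntegral.integral_add_adjacent_intervals hInt1 hInt2]; exact hint
  -- nonnegativity of the model integrals
  have hAnn : 0 ≤ ∫ x in (0:ℝ)..t, Real.sin x ^ (N - 1) :=
    g_int_nonneg hN1 ht0.le le_rfl htπ.le
  have hBnn : 0 ≤ ∫ x in (0:ℝ)..(D - t), Real.sin x ^ (N - 1) :=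
    g_int_nonneg hN1 (by linarith) le_rfl (by linarith)
  have hUnn : 0 ≤ ∫ x in (D - t)..D, Real.sin x ^ (N - 1) :=
    g_int_nonneg hN1 (by linarith) (by linarith) hDπ
  have hVnn : 0 ≤ ∫ x in t..D, Real.sin x ^ (N - 1) :=
    g_int_nonneg hN1 htD.le ht0.le hDπ
  -- A + B ≥ ω - ε
  have hAB : omegaN N - (π - D) ≤ (∫ x in (0:ℝ)..t, Real.sin x ^ (N - 1))
      + (∫ x in (0:ℝ)..(D - t), Real.sin x ^ (N - 1)) := by
    have e1 : (∫ x in (0:ℝ)..(D - t), Real.sin x ^ (N - 1))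
        + (∫ x in (D - t)..π, Real.sin x ^ (N - 1)) = omegaN N :=
      intervalIntegral.integral_add_adjacent_intervals (hgint _ _) (hgint _ _)
    have e2 : (∫ x in (D - t)..π, Real.sin x ^ (N - 1))
        = ∫ x in (0:ℝ)..(π - (D - t)), Real.sin x ^ (N - 1) := by
      rw [g_reflect N (D - t) π, sub_self]
    have e3 : (∫ x in (0:ℝ)..t, Real.sin x ^ (N - 1))
        + (∫ x in t..(π - (D - t)), Real.sin x ^ (N - 1))
        = ∫ x in (0:ℝ)..(π - (D - t)), Real.sin x ^ (N - 1) :=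
      intervalIntegral.integral_add_adjacent_intervals (hgint _ _) (hgint _ _)
    have e4 : (∫ x in t..(π - (D - t)), Real.sin x ^ (N - 1)) ≤ (π - (D - t)) - t :=
      g_int_le hN1 (by linarith) ht0.le (by linarith)
    linarith
  -- U + V ≤ Z + ε
  have hUV : (∫ x in (D - t)..D, Real.sin x ^ (N - 1)) + (∫ x in t..D, Real.sin x ^ (N - 1))
      ≤ (∫ x in (0:ℝ)..D, Real.sin x ^ (N - 1)) + (π - D) := by
    have e1 : (∫ x in (0:ℝ)..(D - t), Real.sin x ^ (N - 1))
        + (∫ x in (D - t)..D, Real.sin x ^ (N - 1))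
        = ∫ x in (0:ℝ)..D, Real.sin x ^ (N - 1) :=
      intervalIntegral.integral_add_adjacent_intervals (hgint _ _) (hgint _ _)
    have e2 : (∫ x in t..D, Real.sin x ^ (N - 1))
        = ∫ x in (π - D)..(π - t), Real.sin x ^ (N - 1) := g_reflect N t D
    have e3 : (∫ x in (0:ℝ)..(π - D), Real.sin x ^ (N - 1))
        + (∫ x in (π - D)..(π - t), Real.sin x ^ (N - 1))
        = ∫ x in (0:ℝ)..(π - t), Real.sin x ^ (N - 1) :=
      intervalIntegral.integral_add_adjacent_intervals (hgint _ _) (hgint _ _)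
    have e4 : (∫ x in (0:ℝ)..(D - t), Real.sin x ^ (N - 1))
        + (∫ x in (D - t)..(π - t), Real.sin x ^ (N - 1))
        = ∫ x in (0:ℝ)..(π - t), Real.sin x ^ (N - 1) :=
      intervalIntegral.integral_add_adjacent_intervals (hgint _ _) (hgint _ _)
    have e5 : (∫ x in (D - t)..(π - t), Real.sin x ^ (N - 1)) ≤ (π - t) - (D - t) :=
      g_int_le hN1 (by linarith) (by linarith) (by linarith)
    have e6 : 0 ≤ ∫ x in (0:ℝ)..(π - D), Real.sin x ^ (N - 1) :=
      g_int_nonneg hN1 (by linarith) le_rfl (by linarith)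
    linarith
  -- identification of the model quantities
  have hsin_eq : Real.sin (t + (π - D)) = Real.sin (D - t) := by
    rw [show t + (π - D) = π - (D - t) by ring, Real.sin_pi_sub]
  have hlam : omegaN N * (∫ s in (0:ℝ)..D, hmodel N s)
      = ∫ x in (0:ℝ)..D, Real.sin x ^ (N - 1) := by
    simp only [hmodel]
    rw [intervalIntegral.integral_div]
    field_simp
  constructor
  · -- lower bound
    have hmpos : 0 < min (Real.sin t ^ (N - 1)) (Real.sin (D - t) ^ (N - 1)) := lt_min hgt hgDt
    have d1 : h t / Real.sin (D - t) ^ (N - 1)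
        ≤ h t / min (Real.sin t ^ (N - 1)) (Real.sin (D - t) ^ (N - 1)) :=
      div_le_div_of_nonneg_left hht hmpos (min_le_right _ _)
    have d2 : h t / Real.sin t ^ (N - 1)
        ≤ h t / min (Real.sin t ^ (N - 1)) (Real.sin (D - t) ^ (N - 1)) :=
      div_le_div_of_nonneg_left hht hmpos (min_le_left _ _)
    have h1 : 1 ≤ ((∫ x in (0:ℝ)..D, Real.sin x ^ (N - 1)) + (π - D))
        * (h t / min (Real.sin t ^ (N - 1)) (Real.sin (D - t) ^ (N - 1))) := by
      calc (1:ℝ) = (∫ x in (0:ℝ)..t, h x) + (∫ x in t..D, h x) := hsplit.symm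
        _ ≤ (∫ x in (D - t)..D, Real.sin x ^ (N - 1)) * (h t / Real.sin (D - t) ^ (N - 1))
            + (∫ x in t..D, Real.sin x ^ (N - 1)) * (h t / Real.sin t ^ (N - 1)) :=
          add_le_add int3 int4
        _ ≤ (∫ x in (D - t)..D, Real.sin x ^ (N - 1))
              * (h t / min (Real.sin t ^ (N - 1)) (Real.sin (D - t) ^ (N - 1)))
            + (∫ x in t..D, Real.sin x ^ (N - 1))
              * (h t / min (Real.sin t ^ (N - 1)) (Real.sin (D - t) ^ (N - 1))) :=
          add_le_add (mul_le_mul_of_nonneg_left d1 hUnn) (mul_le_mul_of_nonneg_left d2 hVnn)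
        _ = ((∫ x in (D - t)..D, Real.sin x ^ (N - 1)) + (∫ x in t..D, Real.sin x ^ (N - 1)))
              * (h t / min (Real.sin t ^ (N - 1)) (Real.sin (D - t) ^ (N - 1))) := by ring
        _ ≤ ((∫ x in (0:ℝ)..D, Real.sin x ^ (N - 1)) + (π - D))
              * (h t / min (Real.sin t ^ (N - 1)) (Real.sin (D - t) ^ (N - 1))) :=
          mul_le_mul_of_nonneg_right hUV (div_nonneg hht hmpos.le)
    have h2 : min (Real.sin t ^ (N - 1)) (Real.sin (D - t) ^ (N - 1))
        ≤ ((∫ x in (0:ℝ)..D, Real.sin x ^ (N - 1)) + (π - D)) * h t := by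
      have h3 := mul_le_mul_of_nonneg_right h1 hmpos.le
      rwa [one_mul, mul_assoc, div_mul_cancel₀ _ hmpos.ne'] at h3
    have hmin : min (hmodel N t) (hmodel N (t + (π - D)))
        = min (Real.sin t ^ (N - 1)) (Real.sin (D - t) ^ (N - 1)) / omegaN N := by
      simp only [hmodel, hsin_eq]
      rw [min_div_div_right hωpos.le]
    have hZεpos : 0 < (∫ x in (0:ℝ)..D, Real.sin x ^ (N - 1)) + (π - D) := by
      have : (0:ℝ) ≤ π - D := by linarith
      linarith
    rw [hlam, hmin]
    have e : omegaN N / ((∫ x in (0:ℝ)..D, Real.sin x ^ (N - 1)) + (π - D))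
          * (min (Real.sin t ^ (N - 1)) (Real.sin (D - t) ^ (N - 1)) / omegaN N)
        = min (Real.sin t ^ (N - 1)) (Real.sin (D - t) ^ (N - 1))
          / ((∫ x in (0:ℝ)..D, Real.sin x ^ (N - 1)) + (π - D)) := by
      rw [div_mul_div_comm, mul_comm (omegaN N)]
      rw [mul_div_mul_right _ _ hωpos.ne']
    rw [e, div_le_iff₀ hZεpos]
    linarith
  · -- upper bound
    have hMpos : 0 < max (Real.sin t ^ (N - 1)) (Real.sin (D - t) ^ (N - 1)) :=
      lt_max_of_lt_left hgt
    have d1 : h t / max (Real.sin t ^ (N - 1)) (Real.sin (D - t) ^ (N - 1))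
        ≤ h t / Real.sin t ^ (N - 1) :=
      div_le_div_of_nonneg_left hht hgt (le_max_left _ _)
    have d2 : h t / max (Real.sin t ^ (N - 1)) (Real.sin (D - t) ^ (N - 1))
        ≤ h t / Real.sin (D - t) ^ (N - 1) :=
      div_le_div_of_nonneg_left hht hgDt (le_max_right _ _)
    have h1 : (omegaN N - (π - D))
        * (h t / max (Real.sin t ^ (N - 1)) (Real.sin (D - t) ^ (N - 1))) ≤ 1 := by
      calc (omegaN N - (π - D))
            * (h t / max (Real.sin t ^ (N - 1)) (Real.sin (D - t) ^ (N - 1)))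
          ≤ ((∫ x in (0:ℝ)..t, Real.sin x ^ (N - 1))
              + (∫ x in (0:ℝ)..(D - t), Real.sin x ^ (N - 1)))
            * (h t / max (Real.sin t ^ (N - 1)) (Real.sin (D - t) ^ (N - 1))) :=
          mul_le_mul_of_nonneg_right hAB (div_nonneg hht hMpos.le)
        _ = (∫ x in (0:ℝ)..t, Real.sin x ^ (N - 1))
              * (h t / max (Real.sin t ^ (N - 1)) (Real.sin (D - t) ^ (N - 1)))
            + (∫ x in (0:ℝ)..(D - t), Real.sin x ^ (N - 1))
              * (h t / max (Real.sin t ^ (N - 1)) (Real.sin (D - t) ^ (N - 1))) := by ring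
        _ ≤ (∫ x in (0:ℝ)..t, Real.sin x ^ (N - 1)) * (h t / Real.sin t ^ (N - 1))
            + (∫ x in (0:ℝ)..(D - t), Real.sin x ^ (N - 1))
              * (h t / Real.sin (D - t) ^ (N - 1)) :=
          add_le_add (mul_le_mul_of_nonneg_left d1 hAnn) (mul_le_mul_of_nonneg_left d2 hBnn)
        _ ≤ (∫ x in (0:ℝ)..t, h x) + (∫ x in t..D, h x) := add_le_add int1 int2
        _ = 1 := hsplit
    have h2 : (omegaN N - (π - D)) * h t
        ≤ max (Real.sin t ^ (N - 1)) (Real.sin (D - t) ^ (N - 1)) := by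
      have h3 := mul_le_mul_of_nonneg_right h1 hMpos.le
      rwa [one_mul, mul_assoc, div_mul_cancel₀ _ hMpos.ne'] at h3
    have hmax : max (hmodel N t) (hmodel N (t + (π - D)))
        = max (Real.sin t ^ (N - 1)) (Real.sin (D - t) ^ (N - 1)) / omegaN N := by
      simp only [hmodel, hsin_eq]
      rw [max_div_div_right hωpos.le]
    have hωε : 0 < omegaN N - (π - D) := by linarith
    rw [hmax]
    have e : omegaN N / (omegaN N - (π - D))
          * (max (Real.sin t ^ (N - 1)) (Real.sin (D - t) ^ (N - 1)) / omegaN N)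
        = max (Real.sin t ^ (N - 1)) (Real.sin (D - t) ^ (N - 1)) / (omegaN N - (π - D)) := by
      rw [div_mul_div_comm, mul_comm (omegaN N)]
      rw [mul_div_mul_right _ _ hωpos.ne']
    rw [e, le_div_iff₀ hωε]
    linarith
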